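/- Fix r ≥ 1, s ≥ 0, n = s + 1. Let 𝔸_a(Q,t) (1 ≤ a ≤ r) and Ω_i(Q,t) (0 ≤ i ≤ s) be n×n matrices with entries in ℂ[[Q^1,…,Q^r,t^0,…,t^s]] that pairwise commute and satisfy Q^b∂𝔸_a/∂Q^b = Q^a∂𝔸_b/∂Q^a, ∂Ω_i/∂t^j = ∂Ω_j/∂t^i, ∂𝔸_a/∂t^i = Q^a∂Ω_i/∂Q^a. Set p_a := 𝔸_a(0,0) and w_i := Ω_i(0,0), and let e_0 ∈ ℂ^n be a vector such that (w_0e_0, …, w_se_0) is a basis of ℂ^n. Let L ∈ M_n(ℂ((ħ^{-1}))[[Q,t]]) be the fundamental solution (ħ∂L/∂t^i + Ω_iL = 0, ħQ^a∂L/∂Q^a + 𝔸_aL − Lp_a = 0, L|_{Q=t=0} = Id), and define elements t̂^0,…,t̂^s of ℂ[[Q,t]] by requiring that the coefficient of ħ^{-1} in the column vector L^{-1}e_0 equals Σ_{i=0}^{s} t̂^i·(w_ie_0). Then: (a) the Jacobian matrix (∂t̂^i/∂t^j) is congruent to the identity modulo the ideal (Q,t), hence invertible over ℂ[[Q,t]];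 (b) Ω_j(Q,t)e_0 = Σ_{i=0}^{s} (∂t̂^i/∂t^j)·(w_ie_0) for every j; and (c) 𝔸_a(Q,t)e_0 = p_ae_0 + Σ_{i=0}^{s} Q^a(∂t̂^i/∂Q^a)·(w_ie_0) for every a. -/

import Mathlib

noncomputable section

/-- `ℂ((ħ⁻¹))`, realized as formal Laurent series (Hahn series over `ℤ`) in the
variable `X = ħ⁻¹`; the coefficient of `ħ^k` is the coefficient at `z = -k`. -/
abbrev LH : Type := LaurentSeries ℂ

/-- The element `ħ = X⁻¹`: the Hahn series with single coefficient `1` in degree `-1`. -/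
def hbar : LH := HahnSeries.single (-1 : ℤ) 1

/-- `f` lies in the subring `ℂ[ħ]` (no positive powers of the variable `X = ħ⁻¹`). -/
def InPolyH (f : LH) : Prop := ∀ z : ℤ, 0 < z → f.coeff z = 0

/-- `f` lies in the subring `ℂ[[ħ⁻¹]]`. -/
def InPSinv (f : LH) : Prop := ∀ z : ℤ, z < 0 → f.coeff z = 0

/-- `f` lies in `ħ⁻¹ · ℂ[[ħ⁻¹]]` (only strictly negative powers of `ħ`). -/
def InPSinvPos (f : LH) : Prop := ∀ z : ℤ, z ≤ 0 → f.coeff z = 0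

/-- `f` is a constant (a complex scalar), i.e. independent of `ħ`. -/
def IsConstL (f : LH) : Prop := ∀ z : ℤ, z ≠ 0 → f.coeff z = 0

section ops

variable {σ R : Type} [CommRing R] {n : ℕ}

/-- Formal partial derivative `∂/∂x` on multivariate formal power series. -/
def pd (x : σ) (f : MvPowerSeries σ R) : MvPowerSeries σ R :=
  fun d => ((d x + 1 : ℕ) : R) * MvPowerSeries.coeff (R := R) (d + Finsupp.single x 1) f

/-- Euler derivative `x·∂/∂x` on multivariate formal power series. -/
def eulerD (x : σ) (f : MvPowerSeries σ R) : MvPowerSeries σ R :=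
  fun d => ((d x : ℕ) : R) * MvPowerSeries.coeff (R := R) d f

/-- Entrywise partial derivative of a matrix of power series. -/
def mpd (x : σ) (M : Matrix (Fin n) (Fin n) (MvPowerSeries σ R)) :
    Matrix (Fin n) (Fin n) (MvPowerSeries σ R) := M.map (pd x)

/-- Entrywise Euler derivative of a matrix of power series. -/
def meu (x : σ) (M : Matrix (Fin n) (Fin n) (MvPowerSeries σ R)) :
    Matrix (Fin n) (Fin n) (MvPowerSeries σ R) := M.map (eulerD x)

/-- A constant matrix, viewed as a matrix of power series. -/
def mC (M : Matrix (Fin n) (Fin n) R) : Matrix (Fin n) (Fin n) (MvPowerSeries σ R) :=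
  M.map (MvPowerSeries.C (σ := σ) (R := R))

/-- Constant term (restriction to `Q = t = 0`) of a matrix of power series. -/
def m0 (M : Matrix (Fin n) (Fin n) (MvPowerSeries σ R)) : Matrix (Fin n) (Fin n) R :=
  M.map (MvPowerSeries.constantCoeff (σ := σ) (R := R))

end ops

section lops

variable {σ : Type} {n : ℕ}

/-- The scalar `ħ` inside `ℂ((ħ⁻¹))[[Q,t]]`. -/
def hbarC (σ : Type) : MvPowerSeries σ LH := MvPowerSeries.C (σ := σ) (R := LH) hbar

/-- The entries of the matrix `M` lie in `ℂ[ħ][[Q,t]]`. -/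
def MatPolyH (M : Matrix (Fin n) (Fin n) (MvPowerSeries σ LH)) : Prop :=
  ∀ (i j : Fin n) (d : σ →₀ ℕ), InPolyH (MvPowerSeries.coeff (R := LH) d (M i j))

/-- The entries of the matrix `M` lie in `ℂ[[Q,t]]`, i.e. are independent of `ħ`. -/
def MatNoH (M : Matrix (Fin n) (Fin n) (MvPowerSeries σ LH)) : Prop :=
  ∀ (i j : Fin n) (d : σ →₀ ℕ), IsConstL (MvPowerSeries.coeff (R := LH) d (M i j))

/-- The first-order operator `v ↦ ħ·(x ∂/∂x)v + A·v` on column vectors. -/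
def nablaE (x : σ) (A : Matrix (Fin n) (Fin n) (MvPowerSeries σ LH))
    (v : Fin n → MvPowerSeries σ LH) : Fin n → MvPowerSeries σ LH :=
  fun i => hbarC σ * eulerD x (v i) + A.mulVec v i

/-- The first-order operator `v ↦ ħ·(∂/∂x)v + A·v` on column vectors. -/
def nablaP (x : σ) (A : Matrix (Fin n) (Fin n) (MvPowerSeries σ LH))
    (v : Fin n → MvPowerSeries σ LH) : Fin n → MvPowerSeries σ LH :=
  fun i => hbarC σ * pd x (v i) + A.mulVec v i

end lops

/-- The inclusion `ℂ[[Q,t]] → ℂ((ħ⁻¹))[[Q,t]]`, coefficientwise. -/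
def psL {σ : Type} (f : MvPowerSeries σ ℂ) : MvPowerSeries σ LH :=
  fun d => HahnSeries.C (MvPowerSeries.coeff (R := ℂ) d f)

/-- The inclusion of matrices over `ℂ[[Q,t]]` into matrices over `ℂ((ħ⁻¹))[[Q,t]]`. -/
def mL {σ : Type} {n : ℕ} (M : Matrix (Fin n) (Fin n) (MvPowerSeries σ ℂ)) :
    Matrix (Fin n) (Fin n) (MvPowerSeries σ LH) := M.map psL

/-- A complex matrix viewed as a constant matrix over `ℂ((ħ⁻¹))[[Q,t]]`. -/
def mCL {σ : Type} {n : ℕ} (M : Matrix (Fin n) (Fin n) ℂ) :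
    Matrix (Fin n) (Fin n) (MvPowerSeries σ LH) :=
  M.map (fun c => MvPowerSeries.C (σ := σ) (R := LH) (HahnSeries.C c))


section helpers
open MvPowerSeries

open Finset

namespace S6

/-! ### Hahn series coefficient lemmas -/

lemma hbar_mul_coeff (y : LH) (z : ℤ) : (hbar * y).coeff z = y.coeff (z + 1) := by
  have h := HahnSeries.coeff_single_mul_add (r := (1 : ℂ)) (x := y) (a := z + 1) (b := (-1 : ℤ))
  rw [show z + 1 + (-1 : ℤ) = z by ring] at h
  simpa [hbar] using h

lemma C_mul_coeff (a : ℂ) (y : LH) (z : ℤ) : (HahnSeries.C a * y).coeff z = a * y.coeff z := by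
  rw [HahnSeries.C_apply, HahnSeries.coeff_single_zero_mul]

lemma mul_C_coeff (a : ℂ) (y : LH) (z : ℤ) : (y * HahnSeries.C a).coeff z = y.coeff z * a := by
  rw [HahnSeries.C_apply, HahnSeries.coeff_mul_single_zero]

lemma natCast_mul_coeff (n : ℕ) (y : LH) (z : ℤ) :
    ((n : LH) * y).coeff z = (n : ℂ) * y.coeff z := by
  rw [← map_natCast (HahnSeries.C : ℂ →+* LH) n, C_mul_coeff]

/-- product of `x` with coefficients only in `z ≥ 1` and `y` with coefficients in `z ≥ 0`
vanishes in degrees `z ≤ 0`. -/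
lemma mul_coeff_eq_zero {x y : LH} (hx : ∀ z : ℤ, z ≤ 0 → x.coeff z = 0)
    (hy : ∀ z : ℤ, z < 0 → y.coeff z = 0) {z : ℤ} (hz : z ≤ 0) : (x * y).coeff z = 0 := by
  rw [HahnSeries.coeff_mul]
  refine Finset.sum_eq_zero fun ij hij => ?_
  rw [Finset.mem_addAntidiagonal] at hij
  rcases le_or_gt ij.1 0 with h | h
  · rw [hx _ h, zero_mul]
  · rw [hy, mul_zero]
    omega

lemma hahn_one_coeff_of_ne (z : ℤ) (hz : z ≠ 0) : (1 : LH).coeff z = 0 := by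
  rw [HahnSeries.coeff_one, if_neg hz]

end S6
end helpers

section helpers2
open MvPowerSeries Finset
namespace S6

variable {σ R : Type} [CommRing R]

lemma coeff_pd (x : σ) (f : MvPowerSeries σ R) (d : σ →₀ ℕ) :
    MvPowerSeries.coeff (R := R) d (pd x f) =
      ((d x + 1 : ℕ) : R) * MvPowerSeries.coeff (R := R) (d + Finsupp.single x 1) f := rfl

lemma coeff_eulerD (x : σ) (f : MvPowerSeries σ R) (d : σ →₀ ℕ) :
    MvPowerSeries.coeff (R := R) d (eulerD x f) = ((d x : ℕ) : R) * MvPowerSeries.coeff (R := R) d f := rfl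

lemma pd_add (x : σ) (f g : MvPowerSeries σ R) : pd x (f + g) = pd x f + pd x g := by
  ext d
  simp [coeff_pd, mul_add, map_add]

lemma eulerD_add (x : σ) (f g : MvPowerSeries σ R) :
    eulerD x (f + g) = eulerD x f + eulerD x g := by
  ext d
  simp [coeff_eulerD, mul_add, map_add]

lemma pd_zero (x : σ) : pd x (0 : MvPowerSeries σ R) = 0 := by
  ext d; simp [coeff_pd]

lemma eulerD_zero (x : σ) : eulerD x (0 : MvPowerSeries σ R) = 0 := by
  ext d; simp [coeff_eulerD]

/-- `pd` as an additive monoid hom. -/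
def pdHom (x : σ) : MvPowerSeries σ R →+ MvPowerSeries σ R where
  toFun := pd x
  map_zero' := pd_zero x
  map_add' := pd_add x

def eulerDHom (x : σ) : MvPowerSeries σ R →+ MvPowerSeries σ R where
  toFun := eulerD x
  map_zero' := eulerD_zero x
  map_add' := eulerD_add x

lemma pd_sum {ι : Type*} (x : σ) (t : Finset ι) (f : ι → MvPowerSeries σ R) :
    pd x (∑ i ∈ t, f i) = ∑ i ∈ t, pd x (f i) :=
  map_sum (pdHom x) f t

lemma eulerD_sum {ι : Type*} (x : σ) (t : Finset ι) (f : ι → MvPowerSeries σ R) :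
    eulerD x (∑ i ∈ t, f i) = ∑ i ∈ t, eulerD x (f i) :=
  map_sum (eulerDHom x) f t

lemma pd_C (x : σ) (c : R) : pd x (MvPowerSeries.C (σ := σ) (R := R) c) = 0 := by
  classical
  ext d
  rw [coeff_pd, MvPowerSeries.coeff_C, if_neg, mul_zero, map_zero]
  intro h
  have := (Finsupp.ext_iff.1 h) x
  simp [Finsupp.add_apply] at this

lemma eulerD_C (x : σ) (c : R) : eulerD x (MvPowerSeries.C (σ := σ) (R := R) c) = 0 := by
  classical
  ext d
  rw [coeff_eulerD, MvPowerSeries.coeff_C]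
  split_ifs with h
  · subst h; simp
  · simp

lemma eulerD_mul (x : σ) (f g : MvPowerSeries σ R) :
    eulerD x (f * g) = eulerD x f * g + f * eulerD x g := by
  classical
  ext d
  rw [map_add, coeff_eulerD, MvPowerSeries.coeff_mul, MvPowerSeries.coeff_mul,
    MvPowerSeries.coeff_mul, Finset.mul_sum, ← Finset.sum_add_distrib]
  refine Finset.sum_congr rfl fun p hp => ?_
  rw [Finset.HasAntidiagonal.mem_antidiagonal] at hp
  have hx : p.1 x + p.2 x = d x := by
    rw [← hp]; simp [Finsupp.add_apply]
  rw [coeff_eulerD, coeff_eulerD, ← hx]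
  push_cast
  ring

lemma eulerD_eq_X_mul_pd (x : σ) (f : MvPowerSeries σ R) :
    eulerD x f = MvPowerSeries.X x * pd x f := by
  classical
  ext d
  rw [coeff_eulerD, MvPowerSeries.X, MvPowerSeries.coeff_monomial_mul]
  split_ifs with h
  · rw [one_mul, coeff_pd]
    rw [tsub_add_cancel_of_le h]
    have hx : 1 ≤ d x := by simpa using (Finsupp.le_def.1 h) x
    congr 2
    rw [Finsupp.tsub_apply, Finsupp.single_apply, if_pos rfl]
    omega
  · have hx : d x = 0 := by
      by_contra hx
      exact h (by
        rw [Finsupp.single_le_iff]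
        omega)
    rw [hx]; simp

lemma pd_mul [NoZeroDivisors R] [Nontrivial R] (x : σ) (f g : MvPowerSeries σ R) :
    pd x (f * g) = pd x f * g + f * pd x g := by
  classical
  have hX : (MvPowerSeries.X x : MvPowerSeries σ R) ≠ 0 := by
    intro h
    have h2 := congrArg (MvPowerSeries.coeff (R := R) (Finsupp.single x 1)) h
    rw [MvPowerSeries.X_def, MvPowerSeries.coeff_monomial_same, map_zero] at h2
    exact one_ne_zero h2
  apply mul_left_cancel₀ hX
  rw [mul_add, ← eulerD_eq_X_mul_pd, eulerD_mul, eulerD_eq_X_mul_pd, eulerD_eq_X_mul_pd]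
  ring

end S6
end helpers2

section helpers3
open MvPowerSeries Finset
namespace S6

/-- total degree of a multi-exponent -/
def deg {σ : Type} (d : σ →₀ ℕ) : ℕ := d.sum fun _ m => m

lemma deg_add {σ : Type} (a b : σ →₀ ℕ) : deg (a + b) = deg a + deg b :=
  Finsupp.sum_add_index' (fun _ => rfl) (fun _ _ _ => rfl)

lemma deg_single {σ : Type} (x : σ) (m : ℕ) : deg (Finsupp.single x m) = m := by
  classical
  simp [deg, Finsupp.sum_single_index]

lemma le_deg {σ : Type} (d : σ →₀ ℕ) (x : σ) : d x ≤ deg d := by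
  classical
  by_cases hx : x ∈ d.support
  · exact Finset.single_le_sum (fun _ _ => Nat.zero_le _) hx
  · simp [Finsupp.notMem_support_iff.1 hx]

lemma deg_fst_le {σ : Type} [DecidableEq σ] {d : σ →₀ ℕ} {p : (σ →₀ ℕ) × (σ →₀ ℕ)}
    (hp : p ∈ Finset.HasAntidiagonal.antidiagonal d) : deg p.1 ≤ deg d := by
  classical
  rw [Finset.HasAntidiagonal.mem_antidiagonal] at hp
  rw [← hp, deg_add]; omega

lemma deg_snd_le {σ : Type} [DecidableEq σ] {d : σ →₀ ℕ} {p : (σ →₀ ℕ) × (σ →₀ ℕ)}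
    (hp : p ∈ Finset.HasAntidiagonal.antidiagonal d) : deg p.2 ≤ deg d := by
  classical
  rw [Finset.HasAntidiagonal.mem_antidiagonal] at hp
  rw [← hp, deg_add]; omega

lemma deg_snd_lt {σ : Type} [DecidableEq σ] {d : σ →₀ ℕ} {p : (σ →₀ ℕ) × (σ →₀ ℕ)}
    (hp : p ∈ Finset.HasAntidiagonal.antidiagonal d) (h1 : p.1 ≠ 0) : deg p.2 < deg d := by
  classical
  rw [Finset.HasAntidiagonal.mem_antidiagonal] at hp
  have h2 : 1 ≤ deg p.1 := by
    obtain ⟨x, hx⟩ := Finsupp.ne_iff.1 h1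
    have := le_deg p.1 x
    simp only [Finsupp.coe_zero, Pi.zero_apply] at hx
    omega
  rw [← hp, deg_add]; omega

/-- Hahn-series coefficient at `z` as an additive monoid hom. -/
def hcoeff (z : ℤ) : LH →+ ℂ where
  toFun y := y.coeff z
  map_zero' := rfl
  map_add' _ _ := rfl

lemma hahn_sum_coeff {ι : Type*} (t : Finset ι) (f : ι → LH) (z : ℤ) :
    (∑ i ∈ t, f i).coeff z = ∑ i ∈ t, (f i).coeff z :=
  map_sum (hcoeff z) f t

lemma coeff_psL {σ : Type} (f : MvPowerSeries σ ℂ) (d : σ →₀ ℕ) :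
    MvPowerSeries.coeff (R := LH) d (psL f) = HahnSeries.C (MvPowerSeries.coeff (R := ℂ) d f) := rfl

lemma coeff_hbarC_mul {σ : Type} (f : MvPowerSeries σ LH) (d : σ →₀ ℕ) :
    MvPowerSeries.coeff (R := LH) d (hbarC σ * f) = hbar * MvPowerSeries.coeff (R := LH) d f :=
  MvPowerSeries.coeff_C_mul d f hbar

end S6
end helpers3

section structL
open MvPowerSeries Finset
namespace S6

lemma structL {r s : ℕ}
    (𝔸 : Fin r → Matrix (Fin (s+1)) (Fin (s+1)) (MvPowerSeries (Fin r ⊕ Fin (s+1)) ℂ))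
    (Ω : Fin (s+1) → Matrix (Fin (s+1)) (Fin (s+1)) (MvPowerSeries (Fin r ⊕ Fin (s+1)) ℂ))
    (p : Fin r → Matrix (Fin (s+1)) (Fin (s+1)) ℂ) (hpdef : ∀ a, m0 (𝔸 a) = p a)
    (L : Matrix (Fin (s+1)) (Fin (s+1)) (MvPowerSeries (Fin r ⊕ Fin (s+1)) LH))
    (hLt : ∀ i, hbarC (Fin r ⊕ Fin (s+1)) • mpd (Sum.inr i) L + mL (Ω i) * L = 0)
    (hLq : ∀ a, hbarC (Fin r ⊕ Fin (s+1)) • meu (Sum.inl a) L + mL (𝔸 a) * L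
      - L * mCL (p a) = 0)
    (hL0 : m0 L = 1) :
    ∀ (d : (Fin r ⊕ Fin (s+1)) →₀ ℕ) (i k : Fin (s+1)) (z : ℤ), z ≤ 0 →
      (MvPowerSeries.coeff (R := LH) d (L i k)).coeff z
        = if d = 0 ∧ z = 0 then (if i = k then 1 else 0) else 0 := by
  classical
  suffices key : ∀ (N : ℕ) (d : (Fin r ⊕ Fin (s+1)) →₀ ℕ), deg d = N →
      ∀ (i k : Fin (s+1)) (z : ℤ), z ≤ 0 →
      (MvPowerSeries.coeff (R := LH) d (L i k)).coeff z
        = if d = 0 ∧ z = 0 then (if i = k then 1 else 0) else 0 by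
    intro d; exact key _ d rfl
  intro N
  induction N using Nat.strong_induction_on with
  | _ N ih =>
  intro d hdN i k z hz
  by_cases hd0 : d = 0
  · subst hd0
    have h1 : MvPowerSeries.coeff (R := LH) 0 (L i k)
        = (1 : Matrix (Fin (s+1)) (Fin (s+1)) LH) i k := by
      rw [MvPowerSeries.coeff_zero_eq_constantCoeff]
      exact congrFun (congrFun hL0 i) k
    rw [h1, Matrix.one_apply]
    by_cases hik : i = k <;> by_cases hz0 : z = 0 <;>
      simp [hik, hz0, HahnSeries.coeff_one]
  · rw [if_neg (by simp [hd0])]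
    by_cases hT : ∃ jj : Fin (s+1), d (Sum.inr jj) ≠ 0
    · obtain ⟨j, hj⟩ := hT
      have hle : Finsupp.single (Sum.inr j : Fin r ⊕ Fin (s+1)) 1 ≤ d := by
        rw [Finsupp.single_le_iff]; omega
      have hdd : (d - Finsupp.single (Sum.inr j : Fin r ⊕ Fin (s+1)) 1)
          + Finsupp.single (Sum.inr j : Fin r ⊕ Fin (s+1)) 1 = d := tsub_add_cancel_of_le hle
      have hdegd' : deg (d - Finsupp.single (Sum.inr j : Fin r ⊕ Fin (s+1)) 1) + 1 = N := by
        rw [← hdd] at hdN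
        rw [deg_add, deg_single] at hdN
        exact hdN
      have hE := congrFun (congrFun (hLt j) i) k
      simp only [Matrix.add_apply, Matrix.smul_apply, Matrix.zero_apply, Matrix.mul_apply,
        mpd, mL, Matrix.map_apply, smul_eq_mul] at hE
      have hEc := congrArg
        (MvPowerSeries.coeff (R := LH) (d - Finsupp.single (Sum.inr j : Fin r ⊕ Fin (s+1)) 1)) hE
      rw [map_add, map_zero, map_sum, coeff_hbarC_mul, coeff_pd, hdd] at hEc
      simp only [MvPowerSeries.coeff_mul, coeff_psL] at hEc
      have hEz := congrArg (fun y : LH => y.coeff (z - 1)) hEc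
      simp only [HahnSeries.coeff_add, HahnSeries.coeff_zero, hbar_mul_coeff,
        hahn_sum_coeff, C_mul_coeff] at hEz
      rw [show z - 1 + 1 = z by ring, natCast_mul_coeff] at hEz
      have hrest : ∀ m, ∑ q ∈ Finset.HasAntidiagonal.antidiagonal
            (d - Finsupp.single (Sum.inr j : Fin r ⊕ Fin (s+1)) 1),
            MvPowerSeries.coeff (R := ℂ) q.1 (Ω j i m) *
              (MvPowerSeries.coeff (R := LH) q.2 (L m k)).coeff (z - 1) = 0 := by
        intro m
        refine Finset.sum_eq_zero fun q hq => ?_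
        have hdq : deg q.2 < N := by
          have := deg_snd_le hq; omega
        rw [ih (deg q.2) hdq q.2 rfl m k (z - 1) (by omega), if_neg (by omega), mul_zero]
      simp only [hrest, Finset.sum_const_zero, add_zero] at hEz
      rcases mul_eq_zero.1 hEz with h | h
      · exfalso
        have h2 := Nat.cast_eq_zero.mp h
        omega
      · exact h
    · push_neg at hT
      obtain ⟨a, ha⟩ : ∃ a : Fin r, d (Sum.inl a) ≠ 0 := by
        by_contra h
        push_neg at h
        apply hd0
        ext x
        cases x with
        | inl aa => simp [h aa]
        | inr jj => simp [hT jj]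
      have hkey : ∀ (i k : Fin (s+1)) (z : ℤ), z ≤ 0 →
          ((d (Sum.inl a) : ℕ) : ℂ) * (MvPowerSeries.coeff (R := LH) d (L i k)).coeff z
            + ((∑ m, p a i m * (MvPowerSeries.coeff (R := LH) d (L m k)).coeff (z-1))
            - (∑ m, (MvPowerSeries.coeff (R := LH) d (L i m)).coeff (z-1) * p a m k)) = 0 := by
        intro i k z hz
        have hE := congrFun (congrFun (hLq a) i) k
        simp only [Matrix.sub_apply, Matrix.add_apply, Matrix.smul_apply, Matrix.zero_apply,
          Matrix.mul_apply, meu, mL, mCL, Matrix.map_apply, smul_eq_mul] at hE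
        have hEc := congrArg (MvPowerSeries.coeff (R := LH) d) hE
        rw [map_sub, map_add, map_zero, map_sum, map_sum, coeff_hbarC_mul, coeff_eulerD] at hEc
        have hcol : ∀ x : Fin (s+1), MvPowerSeries.coeff (R := LH) d
            (L i x * MvPowerSeries.C (σ := Fin r ⊕ Fin (s+1)) (R := LH) (HahnSeries.C (p a x k)))
            = MvPowerSeries.coeff (R := LH) d (L i x) * HahnSeries.C (p a x k) :=
          fun x => MvPowerSeries.coeff_mul_C d (L i x) (HahnSeries.C (p a x k))
        simp only [hcol] at hEc
        simp only [MvPowerSeries.coeff_mul, coeff_psL] at hEc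
        have hsplit : ∀ m, (∑ q ∈ Finset.HasAntidiagonal.antidiagonal d,
            HahnSeries.C (MvPowerSeries.coeff (R := ℂ) q.1 (𝔸 a i m)) *
              MvPowerSeries.coeff (R := LH) q.2 (L m k))
            = HahnSeries.C (p a i m) * MvPowerSeries.coeff (R := LH) d (L m k)
              + ∑ q ∈ (Finset.HasAntidiagonal.antidiagonal d).erase ((0 : (Fin r ⊕ Fin (s+1)) →₀ ℕ), d),
                  HahnSeries.C (MvPowerSeries.coeff (R := ℂ) q.1 (𝔸 a i m)) *
                    MvPowerSeries.coeff (R := LH) q.2 (L m k) := by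
          intro m
          rw [← Finset.add_sum_erase _ _
            (show ((0 : (Fin r ⊕ Fin (s+1)) →₀ ℕ), d) ∈ Finset.HasAntidiagonal.antidiagonal d by
              rw [Finset.HasAntidiagonal.mem_antidiagonal]; simp)]
          congr 2
          rw [MvPowerSeries.coeff_zero_eq_constantCoeff]
          exact congrArg HahnSeries.C (congrFun (congrFun (hpdef a) i) m)
        simp only [hsplit] at hEc
        have hEz := congrArg (fun y : LH => y.coeff (z - 1)) hEc
        simp only [HahnSeries.coeff_add, HahnSeries.coeff_zero, HahnSeries.coeff_sub,
          hbar_mul_coeff, hahn_sum_coeff, C_mul_coeff, mul_C_coeff] at hEz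
        rw [show z - 1 + 1 = z by ring, natCast_mul_coeff] at hEz
        have hrest : ∀ m, ∑ q ∈ (Finset.HasAntidiagonal.antidiagonal d).erase
              ((0 : (Fin r ⊕ Fin (s+1)) →₀ ℕ), d),
            MvPowerSeries.coeff (R := ℂ) q.1 (𝔸 a i m) *
              (MvPowerSeries.coeff (R := LH) q.2 (L m k)).coeff (z - 1) = 0 := by
          intro m
          refine Finset.sum_eq_zero fun q hq => ?_
          have hq2 := Finset.mem_of_mem_erase hq
          have hq1 : q.1 ≠ 0 := by
            intro hq1
            have hqd : q.2 = d := by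
              have := Finset.HasAntidiagonal.mem_antidiagonal.1 hq2
              rw [hq1, zero_add] at this
              exact this
            exact (Finset.ne_of_mem_erase hq) (by rw [← hq1, ← hqd])
          have hdq : deg q.2 < N := by
            have := deg_snd_lt hq2 hq1; omega
          rw [ih (deg q.2) hdq q.2 rfl m k (z - 1) (by omega),
            if_neg (by omega), mul_zero]
        simp only [hrest] at hEz
        simp only [Finset.sum_add_distrib, Finset.sum_const_zero, add_zero] at hEz
        linear_combination hEz
      -- lower bound for the coefficients in this multidegree
      obtain ⟨b, hb⟩ : ∃ b : ℤ, ∀ (i' k' : Fin (s+1)) (z : ℤ), z < b →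
          (MvPowerSeries.coeff (R := LH) d (L i' k')).coeff z = 0 := by
        have h1 : ∀ ik : Fin (s+1) × Fin (s+1), ∃ b : ℤ, ∀ z : ℤ, z < b →
            (MvPowerSeries.coeff (R := LH) d (L ik.1 ik.2)).coeff z = 0 := by
          intro ik
          by_cases h0 : MvPowerSeries.coeff (R := LH) d (L ik.1 ik.2) = 0
          · exact ⟨0, fun z _ => by rw [h0]; rfl⟩
          · exact ⟨_, fun z hzo => HahnSeries.coeff_eq_zero_of_lt_order hzo⟩
        choose bf hbf using h1
        refine ⟨Finset.univ.inf' ⟨(i, k), Finset.mem_univ _⟩ bf, fun i' k' z hzb => ?_⟩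
        exact hbf (i', k') z (lt_of_lt_of_le hzb (Finset.inf'_le _ (Finset.mem_univ _)))
      have main : ∀ (m : ℕ) (z : ℤ), z ≤ 0 → z < b + m → ∀ i' k' : Fin (s+1),
          (MvPowerSeries.coeff (R := LH) d (L i' k')).coeff z = 0 := by
        intro m
        induction m with
        | zero => exact fun z hz0 hzb i' k' => hb i' k' z (by omega)
        | succ m ihm =>
          intro z hz0 hzb i' k'
          by_cases hzc : z < b + m
          · exact ihm z hz0 hzc i' k'
          · have hprev : ∀ i'' k'' : Fin (s+1),
                (MvPowerSeries.coeff (R := LH) d (L i'' k'')).coeff (z - 1) = 0 :=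
              fun i'' k'' => ihm (z - 1) (by omega) (by omega) i'' k''
            have hk2 := hkey i' k' z hz0
            simp only [hprev, mul_zero, zero_mul, Finset.sum_const_zero, add_zero,
              sub_zero] at hk2
            have hna : ((d (Sum.inl a) : ℕ) : ℂ) ≠ 0 := Nat.cast_ne_zero.mpr ha
            exact (mul_eq_zero.1 hk2).resolve_left hna
      exact main (z - b + 1).toNat z hz (by omega) i k

lemma structJ {r s : ℕ}
    (L : Matrix (Fin (s+1)) (Fin (s+1)) (MvPowerSeries (Fin r ⊕ Fin (s+1)) LH))
    (hSL : ∀ (d : (Fin r ⊕ Fin (s+1)) →₀ ℕ) (i k : Fin (s+1)) (z : ℤ), z ≤ 0 →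
      (MvPowerSeries.coeff (R := LH) d (L i k)).coeff z
        = if d = 0 ∧ z = 0 then (if i = k then 1 else 0) else 0)
    (hL0 : m0 L = 1)
    (e₀ : Fin (s+1) → ℂ)
    (J : Fin (s+1) → MvPowerSeries (Fin r ⊕ Fin (s+1)) LH)
    (hLJ : L.mulVec J = fun k => MvPowerSeries.C (σ := Fin r ⊕ Fin (s+1)) (R := LH) (HahnSeries.C (e₀ k))) :
    ∀ (d : (Fin r ⊕ Fin (s+1)) →₀ ℕ) (i : Fin (s+1)) (z : ℤ), z ≤ 0 →
      (MvPowerSeries.coeff (R := LH) d (J i)).coeff z = if d = 0 ∧ z = 0 then e₀ i else 0 := by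
  classical
  suffices key : ∀ (N : ℕ) (d : (Fin r ⊕ Fin (s+1)) →₀ ℕ), deg d = N →
      ∀ (i : Fin (s+1)) (z : ℤ), z ≤ 0 →
      (MvPowerSeries.coeff (R := LH) d (J i)).coeff z = if d = 0 ∧ z = 0 then e₀ i else 0 by
    intro d; exact key _ d rfl
  intro N
  induction N using Nat.strong_induction_on with
  | _ N ih =>
  intro d hdN i z hz
  have hrow := congrFun hLJ i
  simp only [Matrix.mulVec, dotProduct] at hrow
  have hc := congrArg (MvPowerSeries.coeff (R := LH) d) hrow
  rw [map_sum] at hc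
  simp only [MvPowerSeries.coeff_mul] at hc
  have hLik : ∀ k : Fin (s+1), MvPowerSeries.coeff (R := LH) 0 (L i k)
      = (if i = k then (1 : LH) else 0) := by
    intro k
    rw [MvPowerSeries.coeff_zero_eq_constantCoeff]
    have h1 : MvPowerSeries.constantCoeff (σ := Fin r ⊕ Fin (s+1)) (R := LH) (L i k) = m0 L i k := rfl
    rw [h1, hL0, Matrix.one_apply]
  have hsplit : ∀ k : Fin (s+1), ∑ q ∈ Finset.HasAntidiagonal.antidiagonal d,
        MvPowerSeries.coeff (R := LH) q.1 (L i k) * MvPowerSeries.coeff (R := LH) q.2 (J k)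
      = (if i = k then (1:LH) else 0) * MvPowerSeries.coeff (R := LH) d (J k)
        + ∑ q ∈ (Finset.HasAntidiagonal.antidiagonal d).erase ((0 : (Fin r ⊕ Fin (s+1)) →₀ ℕ), d),
            MvPowerSeries.coeff (R := LH) q.1 (L i k) * MvPowerSeries.coeff (R := LH) q.2 (J k) := by
    intro k
    rw [← Finset.add_sum_erase _ _
      (show ((0 : (Fin r ⊕ Fin (s+1)) →₀ ℕ), d) ∈ Finset.HasAntidiagonal.antidiagonal d by
        rw [Finset.HasAntidiagonal.mem_antidiagonal]; simp)]
    rw [hLik k]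
  simp only [hsplit, Finset.sum_add_distrib, ite_mul, one_mul, zero_mul] at hc
  rw [Finset.sum_ite_eq, if_pos (Finset.mem_univ i), MvPowerSeries.coeff_C] at hc
  have hcz := congrArg (fun y : LH => y.coeff z) hc
  simp only [HahnSeries.coeff_add, hahn_sum_coeff] at hcz
  have hrest : ∀ k : Fin (s+1), ∑ q ∈ (Finset.HasAntidiagonal.antidiagonal d).erase
        ((0 : (Fin r ⊕ Fin (s+1)) →₀ ℕ), d),
      (MvPowerSeries.coeff (R := LH) q.1 (L i k) * MvPowerSeries.coeff (R := LH) q.2 (J k)).coeff z = 0 := by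
    intro k
    refine Finset.sum_eq_zero fun q hq => ?_
    have hq2 := Finset.mem_of_mem_erase hq
    have hq1 : q.1 ≠ 0 := by
      intro hq1
      have hqd : q.2 = d := by
        have := Finset.HasAntidiagonal.mem_antidiagonal.1 hq2
        rw [hq1, zero_add] at this
        exact this
      exact (Finset.ne_of_mem_erase hq) (by rw [← hq1, ← hqd])
    have hdq : deg q.2 < N := by
      have := deg_snd_lt hq2 hq1; omega
    refine mul_coeff_eq_zero (fun z' hz' => ?_) (fun z' hz' => ?_) hz
    · rw [hSL q.1 i k z' hz', if_neg (by simp [hq1])]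
    · rw [ih (deg q.2) hdq q.2 rfl k z' (le_of_lt hz'), if_neg (by omega)]
  simp only [hrest, Finset.sum_const_zero, add_zero] at hcz
  rw [hcz]
  by_cases hd0 : d = 0 <;> by_cases hz0 : z = 0 <;>
    simp [hd0, hz0, HahnSeries.C_apply, HahnSeries.coeff_single]

lemma extract {r s : ℕ}
    (L : Matrix (Fin (s+1)) (Fin (s+1)) (MvPowerSeries (Fin r ⊕ Fin (s+1)) LH))
    (hSL : ∀ (d : (Fin r ⊕ Fin (s+1)) →₀ ℕ) (i k : Fin (s+1)) (z : ℤ), z ≤ 0 →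
      (MvPowerSeries.coeff (R := LH) d (L i k)).coeff z
        = if d = 0 ∧ z = 0 then (if i = k then 1 else 0) else 0)
    (hL0 : m0 L = 1)
    (v : Fin (s+1) → MvPowerSeries (Fin r ⊕ Fin (s+1)) LH)
    (hv : ∀ (k : Fin (s+1)) (f : (Fin r ⊕ Fin (s+1)) →₀ ℕ) (z : ℤ), z < 0 →
      (MvPowerSeries.coeff (R := LH) f (v k)).coeff z = 0) :
    ∀ (d : (Fin r ⊕ Fin (s+1)) →₀ ℕ) (i : Fin (s+1)),
      (MvPowerSeries.coeff (R := LH) d (∑ k, L i k * v k)).coeff 0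
        = (MvPowerSeries.coeff (R := LH) d (v i)).coeff 0 := by
  classical
  intro d i
  rw [map_sum]
  simp only [MvPowerSeries.coeff_mul]
  have hLik : ∀ k : Fin (s+1), MvPowerSeries.coeff (R := LH) 0 (L i k)
      = (if i = k then (1 : LH) else 0) := by
    intro k
    rw [MvPowerSeries.coeff_zero_eq_constantCoeff]
    have h1 : MvPowerSeries.constantCoeff (σ := Fin r ⊕ Fin (s+1)) (R := LH) (L i k) = m0 L i k := rfl
    rw [h1, hL0, Matrix.one_apply]
  have hsplit : ∀ k : Fin (s+1), ∑ q ∈ Finset.HasAntidiagonal.antidiagonal d,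
        MvPowerSeries.coeff (R := LH) q.1 (L i k) * MvPowerSeries.coeff (R := LH) q.2 (v k)
      = (if i = k then (1:LH) else 0) * MvPowerSeries.coeff (R := LH) d (v k)
        + ∑ q ∈ (Finset.HasAntidiagonal.antidiagonal d).erase ((0 : (Fin r ⊕ Fin (s+1)) →₀ ℕ), d),
            MvPowerSeries.coeff (R := LH) q.1 (L i k) * MvPowerSeries.coeff (R := LH) q.2 (v k) := by
    intro k
    rw [← Finset.add_sum_erase _ _
      (show ((0 : (Fin r ⊕ Fin (s+1)) →₀ ℕ), d) ∈ Finset.HasAntidiagonal.antidiagonal d by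
        rw [Finset.HasAntidiagonal.mem_antidiagonal]; simp)]
    rw [hLik k]
  simp only [hsplit, Finset.sum_add_distrib, ite_mul, one_mul, zero_mul]
  rw [Finset.sum_ite_eq, if_pos (Finset.mem_univ i)]
  simp only [HahnSeries.coeff_add, hahn_sum_coeff]
  have hrest : ∀ k : Fin (s+1), ∑ q ∈ (Finset.HasAntidiagonal.antidiagonal d).erase
        ((0 : (Fin r ⊕ Fin (s+1)) →₀ ℕ), d),
      (MvPowerSeries.coeff (R := LH) q.1 (L i k) * MvPowerSeries.coeff (R := LH) q.2 (v k)).coeff (0:ℤ)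
        = 0 := by
    intro k
    refine Finset.sum_eq_zero fun q hq => ?_
    have hq2 := Finset.mem_of_mem_erase hq
    have hq1 : q.1 ≠ 0 := by
      intro hq1
      have hqd : q.2 = d := by
        have := Finset.HasAntidiagonal.mem_antidiagonal.1 hq2
        rw [hq1, zero_add] at this
        exact this
      exact (Finset.ne_of_mem_erase hq) (by rw [← hq1, ← hqd])
    refine mul_coeff_eq_zero (fun z' hz' => ?_) (fun z' hz' => hv k q.2 z' hz') le_rfl
    rw [hSL q.1 i k z' hz', if_neg (by simp [hq1])]
  simp only [hrest, Finset.sum_const_zero, add_zero]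

end S6
end structL

open S6

set_option maxHeartbeats 4000000

/-- flat coordinates from the `ħ⁻¹`-expansion of the `J`-function
`J = L⁻¹e₀` of a big abstract quantum D-module in a canonical frame. -/
theorem statement6 (r s : ℕ) (hr : 1 ≤ r)
    (𝔸 : Fin r → Matrix (Fin (s + 1)) (Fin (s + 1)) (MvPowerSeries (Fin r ⊕ Fin (s + 1)) ℂ))
    (Ω : Fin (s + 1) → Matrix (Fin (s + 1)) (Fin (s + 1)) (MvPowerSeries (Fin r ⊕ Fin (s + 1)) ℂ))
    -- the (ħ-independent) connection matrices pairwise commute and are integrable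
    (hAA : ∀ a b, 𝔸 a * 𝔸 b = 𝔸 b * 𝔸 a)
    (hAO : ∀ a i, 𝔸 a * Ω i = Ω i * 𝔸 a)
    (hOO : ∀ i j, Ω i * Ω j = Ω j * Ω i)
    (hiQQ : ∀ a b, meu (Sum.inl b) (𝔸 a) = meu (Sum.inl a) (𝔸 b))
    (hiTT : ∀ i j, mpd (Sum.inr j) (Ω i) = mpd (Sum.inr i) (Ω j))
    (hiQT : ∀ a i, mpd (Sum.inr i) (𝔸 a) = meu (Sum.inl a) (Ω i))
    -- `p_a := 𝔸_a(0,0)`, `w_i := Ω_i(0,0)`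
    (p : Fin r → Matrix (Fin (s + 1)) (Fin (s + 1)) ℂ) (hpdef : ∀ a, m0 (𝔸 a) = p a)
    (w : Fin (s + 1) → Matrix (Fin (s + 1)) (Fin (s + 1)) ℂ) (hwdef : ∀ i, m0 (Ω i) = w i)
    -- `(w_0 e₀, …, w_s e₀)` is a basis of `ℂ^n`
    (e₀ : Fin (s + 1) → ℂ)
    (hbLI : LinearIndependent ℂ (fun i => (w i).mulVec e₀))
    (hbSpan : Submodule.span ℂ (Set.range (fun i => (w i).mulVec e₀)) = ⊤)
    -- `L` is the normalized fundamental solution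
    (L : Matrix (Fin (s + 1)) (Fin (s + 1)) (MvPowerSeries (Fin r ⊕ Fin (s + 1)) LH))
    (hLt : ∀ i, hbarC (Fin r ⊕ Fin (s + 1)) • mpd (Sum.inr i) L + mL (Ω i) * L = 0)
    (hLq : ∀ a, hbarC (Fin r ⊕ Fin (s + 1)) • meu (Sum.inl a) L + mL (𝔸 a) * L
                  - L * mCL (p a) = 0)
    (hL0 : m0 L = 1)
    -- `t̂^0, …, t̂^s` are defined by: the coefficient of `ħ⁻¹` in `L⁻¹ e₀` equals
    -- `Σ_i t̂^i · (w_i e₀)`  (the coefficient of `ħ⁻¹` is the Hahn coefficient at `z = 1`)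
    (that : Fin (s + 1) → MvPowerSeries (Fin r ⊕ Fin (s + 1)) ℂ)
    (hthat : ∀ (j : Fin (s + 1)) (d : (Fin r ⊕ Fin (s + 1)) →₀ ℕ),
      (MvPowerSeries.coeff (R := LH) d
        ((L⁻¹.mulVec (fun k => MvPowerSeries.C (σ := Fin r ⊕ Fin (s + 1)) (R := LH)
            (HahnSeries.C (e₀ k)))) j)).coeff 1
        = ∑ i, MvPowerSeries.coeff (R := ℂ) d (that i) * ((w i).mulVec e₀ j)) :
    -- (a) the Jacobian `(∂t̂^i/∂t^j)` is `Id` modulo `(Q,t)` and invertible over `ℂ[[Q,t]]`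
    (m0 (Matrix.of fun i j => pd (Sum.inr j) (that i)) = 1 ∧
      IsUnit (Matrix.of fun i j => pd (Sum.inr j) (that i))) ∧
    -- (b) `Ω_j e₀ = Σ_i (∂t̂^i/∂t^j)·(w_i e₀)`
    (∀ j, (Ω j).mulVec (fun k => MvPowerSeries.C (σ := Fin r ⊕ Fin (s + 1)) (R := ℂ) (e₀ k))
        = fun k => ∑ i, pd (Sum.inr j) (that i)
            * MvPowerSeries.C (σ := Fin r ⊕ Fin (s + 1)) (R := ℂ) ((w i).mulVec e₀ k)) ∧
    -- (c) `𝔸_a e₀ = p_a e₀ + Σ_i Q^a (∂t̂^i/∂Q^a)·(w_i e₀)`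
    (∀ a, (𝔸 a).mulVec (fun k => MvPowerSeries.C (σ := Fin r ⊕ Fin (s + 1)) (R := ℂ) (e₀ k))
        = fun k => MvPowerSeries.C (σ := Fin r ⊕ Fin (s + 1)) (R := ℂ) ((p a).mulVec e₀ k)
            + ∑ i, eulerD (Sum.inl a) (that i)
                * MvPowerSeries.C (σ := Fin r ⊕ Fin (s + 1)) (R := ℂ) ((w i).mulVec e₀ k)) := by
  classical
  -- the fundamental solution is invertible
  have hdet : IsUnit L.det := by
    rw [MvPowerSeries.isUnit_iff_constantCoeff]
    have h1 : MvPowerSeries.constantCoeff (σ := Fin r ⊕ Fin (s+1)) (R := LH) L.det = (m0 L).det :=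
      RingHom.map_det _ L
    rw [h1, hL0, Matrix.det_one]
    exact isUnit_one
  set e₀L : Fin (s+1) → MvPowerSeries (Fin r ⊕ Fin (s+1)) LH :=
    fun k => MvPowerSeries.C (σ := Fin r ⊕ Fin (s+1)) (R := LH) (HahnSeries.C (e₀ k)) with he₀L
  set J : Fin (s+1) → MvPowerSeries (Fin r ⊕ Fin (s+1)) LH := L⁻¹.mulVec e₀L with hJ
  have hLJ : L.mulVec J = e₀L := by
    rw [hJ, Matrix.mulVec_mulVec, Matrix.mul_nonsing_inv L hdet, Matrix.one_mulVec]
  have hSL := structL 𝔸 Ω p hpdef L hLt hLq hL0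
  have hSJ := structJ L hSL hL0 e₀ J hLJ
  have hLJ' : ∀ m, ∑ k, L m k * J k = e₀L m := by
    intro m
    have := congrFun hLJ m
    simpa [Matrix.mulVec, dotProduct] using this
  -- ### part (b)
  have partB : ∀ j, (Ω j).mulVec (fun k => MvPowerSeries.C (σ := Fin r ⊕ Fin (s + 1)) (R := ℂ) (e₀ k))
      = fun k => ∑ i, pd (Sum.inr j) (that i)
          * MvPowerSeries.C (σ := Fin r ⊕ Fin (s + 1)) (R := ℂ) ((w i).mulVec e₀ k) := by
    intro j
    have hLt' : ∀ i k, hbarC (Fin r ⊕ Fin (s+1)) * pd (Sum.inr j) (L i k)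
        = - ∑ m, psL (Ω j i m) * L m k := by
      intro i k
      have hE := congrFun (congrFun (hLt j) i) k
      simp only [Matrix.add_apply, Matrix.smul_apply, Matrix.zero_apply, Matrix.mul_apply,
        mpd, mL, Matrix.map_apply, smul_eq_mul] at hE
      exact eq_neg_of_add_eq_zero_left hE
    have hDer : ∀ i, ∑ k, L i k *
          (hbarC (Fin r ⊕ Fin (s+1)) * pd (Sum.inr j) (J k))
        = ∑ m, psL (Ω j i m) * e₀L m := by
      intro i
      have h1 : ∑ k, pd (Sum.inr j) (L i k * J k) = 0 := by
        rw [← pd_sum, hLJ' i, he₀L]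
        exact pd_C _ _
      have h2 : ∑ k, (pd (Sum.inr j) (L i k) * J k
          + L i k * pd (Sum.inr j) (J k)) = 0 := by
        rw [← h1]
        exact Finset.sum_congr rfl fun k _ => (pd_mul _ (L i k) (J k)).symm
      have h3 : ∑ k, ((hbarC (Fin r ⊕ Fin (s+1)) * pd (Sum.inr j) (L i k)) * J k
          + L i k * (hbarC (Fin r ⊕ Fin (s+1)) * pd (Sum.inr j) (J k))) = 0 := by
        have := congrArg (fun y => hbarC (Fin r ⊕ Fin (s+1)) * y) h2
        simp only [mul_zero, Finset.mul_sum] at this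
        rw [← this]
        exact Finset.sum_congr rfl fun k _ => by ring
      rw [Finset.sum_add_distrib] at h3
      have e1 : ∀ k : Fin (s+1), (hbarC (Fin r ⊕ Fin (s+1)) * pd (Sum.inr j) (L i k)) * J k
          = - ∑ m, psL (Ω j i m) * (L m k * J k) := by
        intro k
        rw [hLt', neg_mul (∑ m, psL (Ω j i m) * L m k) (J k), Finset.sum_mul]
        simp only [mul_assoc]
      have h4 : ∑ k, (hbarC (Fin r ⊕ Fin (s+1)) * pd (Sum.inr j) (L i k)) * J k
          = - ∑ m, psL (Ω j i m) * e₀L m := by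
        calc ∑ k, (hbarC (Fin r ⊕ Fin (s+1)) * pd (Sum.inr j) (L i k)) * J k
            = ∑ k : Fin (s+1), - ∑ m, psL (Ω j i m) * (L m k * J k) :=
              Finset.sum_congr rfl fun k _ => e1 k
          _ = - ∑ k : Fin (s+1), ∑ m, psL (Ω j i m) * (L m k * J k) := by
              rw [Finset.sum_neg_distrib]
          _ = - ∑ m, ∑ k : Fin (s+1), psL (Ω j i m) * (L m k * J k) := by
              rw [Finset.sum_comm]
          _ = - ∑ m, psL (Ω j i m) * e₀L m := by
              congr 1
              refine Finset.sum_congr rfl fun m _ => ?_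
              rw [← Finset.mul_sum, hLJ' m]
      rw [h4] at h3
      exact (neg_add_eq_zero.mp h3).symm
    have hvz : ∀ (k : Fin (s+1)) (f : (Fin r ⊕ Fin (s+1)) →₀ ℕ) (z : ℤ), z < 0 →
        (MvPowerSeries.coeff (R := LH) f
          (hbarC (Fin r ⊕ Fin (s+1)) * pd (Sum.inr j) (J k))).coeff z = 0 := by
      intro k f z hz
      rw [coeff_hbarC_mul, hbar_mul_coeff, coeff_pd, natCast_mul_coeff,
        hSJ (f + Finsupp.single (Sum.inr j) 1) k (z + 1) (by omega), if_neg, mul_zero]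
      rintro ⟨h1, -⟩
      have h2 := congrArg (fun g : (Fin r ⊕ Fin (s+1)) →₀ ℕ => g (Sum.inr j)) h1
      simp [Finsupp.add_apply] at h2
    have hvc : ∀ (d : (Fin r ⊕ Fin (s+1)) →₀ ℕ) (i : Fin (s+1)),
        (MvPowerSeries.coeff (R := LH) d
          (hbarC (Fin r ⊕ Fin (s+1)) * pd (Sum.inr j) (J i))).coeff 0
          = ((d (Sum.inr j) + 1 : ℕ) : ℂ) * ∑ i', MvPowerSeries.coeff (R := ℂ)
              (d + Finsupp.single (Sum.inr j) 1) (that i') * ((w i').mulVec e₀ i) := by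
      intro d i
      rw [coeff_hbarC_mul, hbar_mul_coeff, coeff_pd, natCast_mul_coeff,
        show (0 : ℤ) + 1 = 1 by norm_num, hthat i (d + Finsupp.single (Sum.inr j) 1)]
    have hRHS : ∀ (d : (Fin r ⊕ Fin (s+1)) →₀ ℕ) (i : Fin (s+1)),
        (MvPowerSeries.coeff (R := LH) d (∑ m, psL (Ω j i m) * e₀L m)).coeff 0
          = ∑ m, MvPowerSeries.coeff (R := ℂ) d (Ω j i m) * e₀ m := by
      intro d i
      rw [map_sum, hahn_sum_coeff]
      refine Finset.sum_congr rfl fun m _ => ?_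
      simp only [he₀L]
      rw [MvPowerSeries.coeff_mul_C, coeff_psL, mul_C_coeff, HahnSeries.C_apply,
        HahnSeries.coeff_single_same]
    funext k
    apply MvPowerSeries.ext
    intro d
    have hext := extract L hSL hL0
      (fun kk => hbarC (Fin r ⊕ Fin (s+1)) * pd (Sum.inr j) (J kk)) hvz d k
    have hstep1 : MvPowerSeries.coeff (R := ℂ) d
        ((Ω j).mulVec (fun k' => MvPowerSeries.C (σ := Fin r ⊕ Fin (s+1)) (R := ℂ) (e₀ k')) k)
        = ∑ m, MvPowerSeries.coeff (R := ℂ) d (Ω j k m) * e₀ m := by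
      simp only [Matrix.mulVec, dotProduct, map_sum]
      exact Finset.sum_congr rfl fun m _ => MvPowerSeries.coeff_mul_C d (Ω j k m) (e₀ m)
    rw [hstep1, ← hRHS d k, ← hDer k, hext, hvc d k, map_sum, Finset.mul_sum]
    refine Finset.sum_congr rfl fun i' _ => ?_
    rw [MvPowerSeries.coeff_mul_C, coeff_pd]
    ring
  -- ### part (c)
  have partC : ∀ a, (𝔸 a).mulVec (fun k => MvPowerSeries.C (σ := Fin r ⊕ Fin (s + 1)) (R := ℂ) (e₀ k))
      = fun k => MvPowerSeries.C (σ := Fin r ⊕ Fin (s + 1)) (R := ℂ) ((p a).mulVec e₀ k)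
          + ∑ i, eulerD (Sum.inl a) (that i)
              * MvPowerSeries.C (σ := Fin r ⊕ Fin (s + 1)) (R := ℂ) ((w i).mulVec e₀ k) := by
    intro a
    set v : Fin (s+1) → MvPowerSeries (Fin r ⊕ Fin (s+1)) LH :=
      fun m => (∑ kk, MvPowerSeries.C (σ := Fin r ⊕ Fin (s+1)) (R := LH) (HahnSeries.C (p a m kk)) * J kk)
        + hbarC (Fin r ⊕ Fin (s+1)) * eulerD (Sum.inl a) (J m) with hvdef
    have hLq' : ∀ i k, hbarC (Fin r ⊕ Fin (s+1)) * eulerD (Sum.inl a) (L i k)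
        = (∑ m, L i m * MvPowerSeries.C (σ := Fin r ⊕ Fin (s+1)) (R := LH) (HahnSeries.C (p a m k)))
          - ∑ m, psL (𝔸 a i m) * L m k := by
      intro i k
      have hE := congrFun (congrFun (hLq a) i) k
      simp only [Matrix.sub_apply, Matrix.add_apply, Matrix.smul_apply, Matrix.zero_apply,
        Matrix.mul_apply, meu, mL, mCL, Matrix.map_apply, smul_eq_mul] at hE
      linear_combination hE
    have hDerC : ∀ i, ∑ m, L i m * v m = ∑ m, psL (𝔸 a i m) * e₀L m := by
      intro i
      have h1 : ∑ k, eulerD (Sum.inl a) (L i k * J k) = 0 := by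
        rw [← eulerD_sum, hLJ' i, he₀L]
        exact eulerD_C _ _
      have h2 : ∑ k, (eulerD (Sum.inl a) (L i k) * J k
          + L i k * eulerD (Sum.inl a) (J k)) = 0 := by
        rw [← h1]
        exact Finset.sum_congr rfl fun k _ => (eulerD_mul _ (L i k) (J k)).symm
      have h3 : ∑ k, ((hbarC (Fin r ⊕ Fin (s+1)) * eulerD (Sum.inl a) (L i k)) * J k
          + L i k * (hbarC (Fin r ⊕ Fin (s+1)) * eulerD (Sum.inl a) (J k))) = 0 := by
        have := congrArg (fun y => hbarC (Fin r ⊕ Fin (s+1)) * y) h2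
        simp only [mul_zero, Finset.mul_sum] at this
        rw [← this]
        exact Finset.sum_congr rfl fun k _ => by ring
      rw [Finset.sum_add_distrib] at h3
      have e1 : ∀ k : Fin (s+1),
          (hbarC (Fin r ⊕ Fin (s+1)) * eulerD (Sum.inl a) (L i k)) * J k
          = (∑ m, L i m *
              (MvPowerSeries.C (σ := Fin r ⊕ Fin (s+1)) (R := LH) (HahnSeries.C (p a m k)) * J k))
            - ∑ m, psL (𝔸 a i m) * (L m k * J k) := by
        intro k
        rw [hLq' i k, sub_mul, Finset.sum_mul, Finset.sum_mul]
        simp only [mul_assoc]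
      have h4 : ∑ k, (hbarC (Fin r ⊕ Fin (s+1)) * eulerD (Sum.inl a) (L i k)) * J k
          = (∑ m, L i m * ∑ kk, MvPowerSeries.C (σ := Fin r ⊕ Fin (s+1)) (R := LH)
                (HahnSeries.C (p a m kk)) * J kk)
            - ∑ m, psL (𝔸 a i m) * e₀L m := by
        rw [Finset.sum_congr rfl fun k _ => e1 k, Finset.sum_sub_distrib]
        congr 1
        · rw [Finset.sum_comm]
          exact Finset.sum_congr rfl fun m _ => by rw [← Finset.mul_sum]
        · rw [Finset.sum_comm]
          refine Finset.sum_congr rfl fun m _ => ?_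
          rw [← Finset.mul_sum, hLJ' m]
      rw [h4] at h3
      have h5 : ∑ m, L i m * v m
          = (∑ m, L i m * ∑ kk, MvPowerSeries.C (σ := Fin r ⊕ Fin (s+1)) (R := LH)
                (HahnSeries.C (p a m kk)) * J kk)
            + ∑ m, L i m * (hbarC (Fin r ⊕ Fin (s+1)) * eulerD (Sum.inl a) (J m)) := by
        rw [← Finset.sum_add_distrib]
        refine Finset.sum_congr rfl fun m _ => ?_
        rw [hvdef]
        ring
      rw [h5]
      linear_combination h3
    have hvzC : ∀ (m : Fin (s+1)) (f : (Fin r ⊕ Fin (s+1)) →₀ ℕ) (z : ℤ), z < 0 →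
        (MvPowerSeries.coeff (R := LH) f (v m)).coeff z = 0 := by
      intro m f z hz
      have hA : (MvPowerSeries.coeff (R := LH) f (∑ kk, MvPowerSeries.C (σ := Fin r ⊕ Fin (s+1)) (R := LH)
          (HahnSeries.C (p a m kk)) * J kk)).coeff z = 0 := by
        rw [map_sum, hahn_sum_coeff]
        refine Finset.sum_eq_zero fun kk _ => ?_
        rw [MvPowerSeries.coeff_C_mul, C_mul_coeff, hSJ f kk z (by omega),
          if_neg (by omega), mul_zero]
      have hB : (MvPowerSeries.coeff (R := LH) f
          (hbarC (Fin r ⊕ Fin (s+1)) * eulerD (Sum.inl a) (J m))).coeff z = 0 := by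
        rw [coeff_hbarC_mul, hbar_mul_coeff, coeff_eulerD, natCast_mul_coeff,
          hSJ f m (z + 1) (by omega)]
        by_cases hf0 : f = 0
        · subst hf0; simp
        · rw [if_neg (by simp [hf0]), mul_zero]
      rw [hvdef]
      rw [map_add, HahnSeries.coeff_add, hA, hB, add_zero]
    have hvcC : ∀ (d : (Fin r ⊕ Fin (s+1)) →₀ ℕ) (m : Fin (s+1)),
        (MvPowerSeries.coeff (R := LH) d (v m)).coeff 0
          = (if d = 0 then (p a).mulVec e₀ m else 0)
            + ((d (Sum.inl a) : ℕ) : ℂ) * ∑ i, MvPowerSeries.coeff (R := ℂ) d (that i)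
                * ((w i).mulVec e₀ m) := by
      intro d m
      have hA : (MvPowerSeries.coeff (R := LH) d (∑ kk, MvPowerSeries.C (σ := Fin r ⊕ Fin (s+1)) (R := LH)
          (HahnSeries.C (p a m kk)) * J kk)).coeff 0
          = (if d = 0 then (p a).mulVec e₀ m else 0) := by
        rw [map_sum, hahn_sum_coeff]
        have hterm : ∀ kk : Fin (s+1), (MvPowerSeries.coeff (R := LH) d
            (MvPowerSeries.C (σ := Fin r ⊕ Fin (s+1)) (R := LH) (HahnSeries.C (p a m kk)) * J kk)).coeff
              (0:ℤ)
            = p a m kk * (if d = 0 then e₀ kk else 0) := by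
          intro kk
          rw [MvPowerSeries.coeff_C_mul, C_mul_coeff, hSJ d kk 0 le_rfl]
          simp
        rw [Finset.sum_congr rfl fun kk _ => hterm kk]
        by_cases hd0 : d = 0
        · simp only [hd0, if_pos]
          simp [Matrix.mulVec, dotProduct]
        · simp [hd0]
      have hB : (MvPowerSeries.coeff (R := LH) d
          (hbarC (Fin r ⊕ Fin (s+1)) * eulerD (Sum.inl a) (J m))).coeff 0
          = ((d (Sum.inl a) : ℕ) : ℂ) * ∑ i, MvPowerSeries.coeff (R := ℂ) d (that i)
              * ((w i).mulVec e₀ m) := by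
        rw [coeff_hbarC_mul, hbar_mul_coeff, coeff_eulerD, natCast_mul_coeff,
          show (0 : ℤ) + 1 = 1 by norm_num, hthat m d]
      rw [hvdef]
      rw [map_add, HahnSeries.coeff_add, hA, hB]
    have hRHSA : ∀ (d : (Fin r ⊕ Fin (s+1)) →₀ ℕ) (i : Fin (s+1)),
        (MvPowerSeries.coeff (R := LH) d (∑ m, psL (𝔸 a i m) * e₀L m)).coeff 0
          = ∑ m, MvPowerSeries.coeff (R := ℂ) d (𝔸 a i m) * e₀ m := by
      intro d i
      rw [map_sum, hahn_sum_coeff]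
      refine Finset.sum_congr rfl fun m _ => ?_
      simp only [he₀L]
      rw [MvPowerSeries.coeff_mul_C, coeff_psL, mul_C_coeff, HahnSeries.C_apply,
        HahnSeries.coeff_single_same]
    funext k
    apply MvPowerSeries.ext
    intro d
    have hext := extract L hSL hL0 v hvzC d k
    have hstep1 : MvPowerSeries.coeff (R := ℂ) d
        ((𝔸 a).mulVec (fun k' => MvPowerSeries.C (σ := Fin r ⊕ Fin (s+1)) (R := ℂ) (e₀ k')) k)
        = ∑ m, MvPowerSeries.coeff (R := ℂ) d (𝔸 a k m) * e₀ m := by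
      simp only [Matrix.mulVec, dotProduct, map_sum]
      exact Finset.sum_congr rfl fun m _ => MvPowerSeries.coeff_mul_C d (𝔸 a k m) (e₀ m)
    rw [hstep1, ← hRHSA d k, ← hDerC k, hext, hvcC d k, map_add, MvPowerSeries.coeff_C,
      map_sum, Finset.mul_sum]
    congr 1
    refine Finset.sum_congr rfl fun i' _ => ?_
    rw [MvPowerSeries.coeff_mul_C, coeff_eulerD]
    ring
  -- ### part (a)
  have hJac0 : ∀ (i' jj : Fin (s+1)),
      MvPowerSeries.constantCoeff (σ := Fin r ⊕ Fin (s+1)) (R := ℂ) (pd (Sum.inr jj) (that i'))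
        = if i' = jj then 1 else 0 := by
    intro i' jj
    have hlin : ∀ k, ((w jj).mulVec e₀) k
        = ∑ i, MvPowerSeries.constantCoeff (σ := Fin r ⊕ Fin (s+1)) (R := ℂ) (pd (Sum.inr jj) (that i))
            * ((w i).mulVec e₀ k) := by
      intro k
      have hb := congrFun (partB jj) k
      have hc := congrArg (MvPowerSeries.constantCoeff (σ := Fin r ⊕ Fin (s+1)) (R := ℂ)) hb
      rw [map_sum] at hc
      have hL : MvPowerSeries.constantCoeff (σ := Fin r ⊕ Fin (s+1)) (R := ℂ)
          ((Ω jj).mulVec (fun k' => MvPowerSeries.C (σ := Fin r ⊕ Fin (s+1)) (R := ℂ) (e₀ k')) k)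
          = (w jj).mulVec e₀ k := by
        simp only [Matrix.mulVec, dotProduct, map_sum]
        refine Finset.sum_congr rfl fun m _ => ?_
        rw [← MvPowerSeries.coeff_zero_eq_constantCoeff, MvPowerSeries.coeff_mul_C,
          MvPowerSeries.coeff_zero_eq_constantCoeff]
        congr 1
        exact congrFun (congrFun (hwdef jj) k) m
      rw [hL] at hc
      rw [hc]
      refine Finset.sum_congr rfl fun i _ => ?_
      rw [← MvPowerSeries.coeff_zero_eq_constantCoeff, MvPowerSeries.coeff_mul_C,
        MvPowerSeries.coeff_zero_eq_constantCoeff]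
    have hz : ∑ i, ((MvPowerSeries.constantCoeff (σ := Fin r ⊕ Fin (s+1)) (R := ℂ)
          (pd (Sum.inr jj) (that i)) - if i = jj then 1 else 0) • (w i).mulVec e₀)
        = 0 := by
      ext k
      simp only [Finset.sum_apply, Pi.smul_apply, Pi.zero_apply, smul_eq_mul, sub_mul]
      rw [Finset.sum_sub_distrib]
      have h1 : ∑ i, (if i = jj then (1:ℂ) else 0) * (w i).mulVec e₀ k
          = (w jj).mulVec e₀ k := by
        simp only [ite_mul, one_mul, zero_mul]
        rw [Finset.sum_ite_eq' Finset.univ jj (fun i => (w i).mulVec e₀ k)]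
        rw [if_pos (Finset.mem_univ jj)]
      rw [h1, ← hlin k, sub_self]
    have hg := Fintype.linearIndependent_iff.1 hbLI
      (fun i => MvPowerSeries.constantCoeff (σ := Fin r ⊕ Fin (s+1)) (R := ℂ) (pd (Sum.inr jj) (that i))
        - if i = jj then 1 else 0) hz i'
    exact sub_eq_zero.1 hg
  have hm0Jac : m0 (Matrix.of fun i j => pd (Sum.inr j) (that i)) = 1 := by
    ext i jj
    simp only [m0, Matrix.map_apply, Matrix.of_apply, Matrix.one_apply]
    exact hJac0 i jj
  have hdetJ : IsUnit (Matrix.of fun i j => pd (Sum.inr j) (that i)).det := by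
    rw [MvPowerSeries.isUnit_iff_constantCoeff]
    have h1 : MvPowerSeries.constantCoeff (σ := Fin r ⊕ Fin (s+1)) (R := ℂ)
        (Matrix.of fun i j => pd (Sum.inr j) (that i)).det
        = (m0 (Matrix.of fun i j => pd (Sum.inr j) (that i))).det :=
      RingHom.map_det _ _
    rw [h1, hm0Jac, Matrix.det_one]
    exact isUnit_one
  exact ⟨⟨hm0Jac, (Matrix.isUnit_iff_isUnit_det _).2 hdetJ⟩, partB, partC⟩
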